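/- Let r be a positive integer with at least two distinct prime factors, and let w : {primes dividing r} → ℂ satisfy |w(p)| ≤ 1 for all p | r. Then |1 - (1/φ(r)) ∏_{p^a ∥ r} (w(p)^a - w(p)^{a-1})| ≤ ∏_{p | r} |1 + (1 - w(p))/(p - 1)|. -/

import Mathlib

open Finset

lemma aux_prod (a : ℕ → ℝ) (s : Finset ℕ) (ha : ∀ i ∈ s, 0 ≤ a i) :
    ∀ b c : ℝ, 0 ≤ b → 0 ≤ c →
    (1 + b * c * ∏ i ∈ s, a i) ^ 2
      ≤ (1 + b ^ 2) * (1 + c ^ 2) * ∏ i ∈ s, (1 + (a i) ^ 2) := by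
  induction s using Finset.cons_induction with
  | empty =>
      intro b c hb hc
      simp only [Finset.prod_empty, mul_one]
      nlinarith [sq_nonneg (b - c), sq_nonneg (b * c)]
  | cons x t hx ih =>
      intro b c hb hc
      have hax : 0 ≤ a x := ha x (Finset.mem_cons_self x t)
      have ha' : ∀ i ∈ t, 0 ≤ a i := fun i hi => ha i (Finset.mem_cons.mpr (Or.inr hi))
      have h1 := ih ha' b (c * a x) hb (mul_nonneg hc hax)
      rw [Finset.prod_cons, Finset.prod_cons]
      have hp : (0:ℝ) ≤ ∏ i ∈ t, (1 + (a i) ^ 2) :=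
        Finset.prod_nonneg fun i _ => by positivity
      have h2 : (1 + (c * a x) ^ 2) ≤ (1 + c ^ 2) * (1 + (a x) ^ 2) := by
        nlinarith [sq_nonneg c, sq_nonneg (a x), sq_nonneg (c * a x)]
      calc (1 + b * c * (a x * ∏ i ∈ t, a i)) ^ 2
          = (1 + b * (c * a x) * ∏ i ∈ t, a i) ^ 2 := by ring_nf
        _ ≤ (1 + b ^ 2) * (1 + (c * a x) ^ 2) * ∏ i ∈ t, (1 + (a i) ^ 2) := h1
        _ ≤ (1 + b ^ 2) * ((1 + c ^ 2) * (1 + (a x) ^ 2)) * ∏ i ∈ t, (1 + (a i) ^ 2) := by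
            have hb2 : (0:ℝ) ≤ 1 + b ^ 2 := by positivity
            have := mul_le_mul_of_nonneg_left h2 hb2
            exact mul_le_mul_of_nonneg_right this hp
        _ = (1 + b ^ 2) * (1 + c ^ 2) * ((1 + (a x) ^ 2) * ∏ i ∈ t, (1 + (a i) ^ 2)) := by
            ring

lemma aux_main (a : ℕ → ℝ) (s : Finset ℕ) (ha : ∀ i ∈ s, 0 ≤ a i) (hs : 2 ≤ s.card) :
    (1 + ∏ i ∈ s, a i) ^ 2 ≤ ∏ i ∈ s, (1 + (a i) ^ 2) := by
  obtain ⟨p, hp, q, hq, hpq⟩ := Finset.one_lt_card.mp hs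
  have hq' : q ∈ s.erase p := Finset.mem_erase.mpr ⟨Ne.symm hpq, hq⟩
  rw [← Finset.mul_prod_erase s a hp, ← Finset.mul_prod_erase _ a hq',
      ← Finset.mul_prod_erase s (fun i => 1 + a i ^ 2) hp,
      ← Finset.mul_prod_erase _ (fun i => 1 + a i ^ 2) hq']
  have key := aux_prod a ((s.erase p).erase q)
    (fun i hi => ha i (Finset.mem_of_mem_erase (Finset.mem_of_mem_erase hi)))
    (a p) (a q) (ha p hp) (ha q hq)
  calc (1 + a p * (a q * ∏ i ∈ (s.erase p).erase q, a i)) ^ 2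
      = (1 + a p * a q * ∏ i ∈ (s.erase p).erase q, a i) ^ 2 := by ring
    _ ≤ (1 + a p ^ 2) * (1 + a q ^ 2) * ∏ i ∈ (s.erase p).erase q, (1 + a i ^ 2) := key
    _ = (1 + a p ^ 2) * ((1 + a q ^ 2) * ∏ i ∈ (s.erase p).erase q, (1 + a i ^ 2)) := by ring

lemma one_add_normSq_le (z : ℂ) (hz : 0 ≤ z.re) : 1 + ‖z‖ ^ 2 ≤ ‖1 + z‖ ^ 2 := by
  simp only [Complex.sq_norm, Complex.normSq_apply, Complex.add_re,
    Complex.add_im, Complex.one_re, Complex.one_im]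
  nlinarith

theorem product_term_bound (r : ℕ) (hr : 2 ≤ r.primeFactors.card)
    (w : ℕ → ℂ) (hw : ∀ p ∈ r.primeFactors, ‖w p‖ ≤ 1) :
    ‖1 - (1 / (Nat.totient r : ℂ))
        * ∏ p ∈ r.primeFactors,
            (w p ^ (r.factorization p) - w p ^ (r.factorization p - 1))‖
      ≤ ∏ p ∈ r.primeFactors, ‖1 + (1 - w p) / ((p : ℂ) - 1)‖ := by
  classical
  have hr0 : r ≠ 0 := by
    rintro rfl
    simp at hr
  set s := r.primeFactors with hsdef
  set f : ℕ → ℝ := fun p => ‖1 - w p‖ / ((p : ℝ) - 1) with hfdef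
  have hple : ∀ p ∈ s, (2:ℝ) ≤ (p:ℝ) := by
    intro p hp
    exact_mod_cast (Nat.prime_of_mem_primeFactors hp).two_le
  have hfnn : ∀ p ∈ s, 0 ≤ f p := by
    intro p hp
    have := hple p hp
    exact div_nonneg (norm_nonneg _) (by linarith)
  -- totient as a real product
  have hφprod : (r.totient : ℝ)
      = ∏ p ∈ s, ((p:ℝ) ^ (r.factorization p - 1) * ((p:ℝ) - 1)) := by
    rw [Nat.totient_eq_prod_factorization hr0, Finsupp.prod, Nat.support_factorization]
    push_cast
    refine Finset.prod_congr rfl fun p hp => ?_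
    have h2 : (2:ℝ) ≤ (p:ℝ) := hple p hp
    have h1 : (1:ℕ) ≤ p := by exact_mod_cast (by linarith : (1:ℝ) ≤ (p:ℝ))
    rw [Nat.cast_sub h1]
    push_cast
    ring
  -- step 1 : norm of product over totient ≤ ∏ f
  have hA : ‖∏ p ∈ s, (w p ^ (r.factorization p) - w p ^ (r.factorization p - 1))‖
      / (r.totient : ℝ) ≤ ∏ p ∈ s, f p := by
    rw [norm_prod, hφprod, ← Finset.prod_div_distrib]
    refine Finset.prod_le_prod (fun p hp => div_nonneg (norm_nonneg _) ?_) (fun p hp => ?_)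
    · have h2 := hple p hp
      exact mul_nonneg (pow_nonneg (by linarith) _) (by linarith)
    · have h2 := hple p hp
      have hapos : 0 < r.factorization p :=
        Nat.Prime.factorization_pos_of_dvd (Nat.prime_of_mem_primeFactors hp) hr0
          (Nat.dvd_of_mem_primeFactors hp)
      have hnum : ‖w p ^ (r.factorization p) - w p ^ (r.factorization p - 1)‖ ≤ ‖1 - w p‖ := by
        have he2 : w p ^ (r.factorization p) - w p ^ (r.factorization p - 1)
            = w p ^ (r.factorization p - 1) * (w p - 1) := by
          rw [mul_sub, mul_one, ← pow_succ, Nat.sub_add_cancel hapos]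
        rw [he2, norm_mul, norm_pow, norm_sub_rev]
        have h1 : ‖w p‖ ^ (r.factorization p - 1) ≤ 1 :=
          pow_le_one₀ (norm_nonneg _) (hw p hp)
        calc ‖w p‖ ^ (r.factorization p - 1) * ‖1 - w p‖
            ≤ 1 * ‖1 - w p‖ := mul_le_mul_of_nonneg_right h1 (norm_nonneg _)
          _ = ‖1 - w p‖ := one_mul _
      have hpow1 : (1:ℝ) ≤ (p:ℝ) ^ (r.factorization p - 1) := by
        calc (1:ℝ) = 1 ^ (r.factorization p - 1) := (one_pow _).symm
          _ ≤ (p:ℝ) ^ (r.factorization p - 1) :=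
              pow_le_pow_left₀ (by norm_num) (by linarith) _
      have hden : (p:ℝ) - 1 ≤ (p:ℝ) ^ (r.factorization p - 1) * ((p:ℝ) - 1) := by
        nlinarith
      exact div_le_div₀ (norm_nonneg _) hnum (by linarith) hden
  -- step 2 : bound the whole left side by 1 + ∏ f
  have hL : ‖1 - (1 / (Nat.totient r : ℂ))
        * ∏ p ∈ s, (w p ^ (r.factorization p) - w p ^ (r.factorization p - 1))‖
      ≤ 1 + ∏ p ∈ s, f p := by
    have hφR : ‖(1 / (Nat.totient r : ℂ))‖ = 1 / (r.totient : ℝ) := by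
      rw [norm_div, norm_one, Complex.norm_natCast]
    calc ‖1 - (1 / (Nat.totient r : ℂ))
          * ∏ p ∈ s, (w p ^ (r.factorization p) - w p ^ (r.factorization p - 1))‖
        ≤ ‖(1:ℂ)‖ + ‖(1 / (Nat.totient r : ℂ))
            * ∏ p ∈ s, (w p ^ (r.factorization p) - w p ^ (r.factorization p - 1))‖ :=
          norm_sub_le _ _
      _ = 1 + ‖∏ p ∈ s, (w p ^ (r.factorization p) - w p ^ (r.factorization p - 1))‖
            / (r.totient : ℝ) := by
          rw [norm_one, norm_mul, hφR]; ring
      _ ≤ 1 + ∏ p ∈ s, f p := by linarith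
  -- step 3 : compare squares
  have hper : ∀ p ∈ s, 1 + (f p) ^ 2 ≤ ‖1 + (1 - w p) / ((p : ℂ) - 1)‖ ^ 2 := by
    intro p hp
    have h2 := hple p hp
    set z := (1 - w p) / ((p : ℂ) - 1) with hz
    have hc : ((p:ℂ) - 1) = (((p:ℝ) - 1 : ℝ) : ℂ) := by push_cast; ring
    have hnz : ‖z‖ = f p := by
      rw [hz, norm_div, hc, Complex.norm_real, Real.norm_of_nonneg (by linarith)]
    have hre : 0 ≤ z.re := by
      rw [hz, hc, Complex.div_ofReal_re]
      have : (1 - w p).re = 1 - (w p).re := by simp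
      rw [this]
      have hwre : (w p).re ≤ 1 := le_trans (Complex.re_le_norm _) (hw p hp)
      exact div_nonneg (by linarith) (by linarith)
    have := one_add_normSq_le z hre
    rw [hnz] at this
    exact this
  have hsq : (1 + ∏ p ∈ s, f p) ^ 2
      ≤ (∏ p ∈ s, ‖1 + (1 - w p) / ((p : ℂ) - 1)‖) ^ 2 := by
    calc (1 + ∏ p ∈ s, f p) ^ 2
        ≤ ∏ p ∈ s, (1 + (f p) ^ 2) := aux_main f s hfnn hr
      _ ≤ ∏ p ∈ s, ‖1 + (1 - w p) / ((p : ℂ) - 1)‖ ^ 2 :=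
          Finset.prod_le_prod (fun p _ => by positivity) hper
      _ = (∏ p ∈ s, ‖1 + (1 - w p) / ((p : ℂ) - 1)‖) ^ 2 := by
          rw [Finset.prod_pow]
  have hRHS0 : 0 ≤ ∏ p ∈ s, ‖1 + (1 - w p) / ((p : ℂ) - 1)‖ :=
    Finset.prod_nonneg fun p _ => norm_nonneg _
  refine le_of_pow_le_pow_left₀ two_ne_zero hRHS0 ?_
  calc ‖1 - (1 / (Nat.totient r : ℂ))
        * ∏ p ∈ s, (w p ^ (r.factorization p) - w p ^ (r.factorization p - 1))‖ ^ 2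
      ≤ (1 + ∏ p ∈ s, f p) ^ 2 := pow_le_pow_left₀ (norm_nonneg _) hL 2
    _ ≤ _ := hsq
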